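/- Let q be a prime. For every integer n, sin(2πn/q) = (√q/(q-1))·Σ_{χ mod q, χ odd} ε̄_χ·χ(n), where ε_χ is the normalized Gauss sum of the odd Dirichlet character χ mod q. -/

import Mathlib

open Complex Finset
open scoped Classical

/-- The normalized Gauss sum (root number) of an odd Dirichlet character mod `q`:
`ε_χ = (∑_{a mod q} χ(a) e^{2πia/q}) / (i√q)`. -/
noncomputable def rootNumberOdd {q : ℕ} [NeZero q] (χ : DirichletCharacter ℂ q) : ℂ :=
  (∑ a : ZMod q, χ a * Complex.exp (2 * Real.pi * Complex.I * (a.val : ℂ) / q)) /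
    (Complex.I * Real.sqrt q)

lemma exp_val_eq (q : ℕ) [NeZero q] (m : ℤ) (b : ZMod q) (hb : (m : ZMod q) = b) :
    Complex.exp (2 * Real.pi * Complex.I * (b.val : ℂ) / q)
      = Complex.exp (2 * Real.pi * Complex.I * (m : ℂ) / q) := by
  obtain ⟨k, hk⟩ : ((q:ℤ)) ∣ (b.val : ℤ) - m := by
    rw [← ZMod.intCast_zmod_eq_zero_iff_dvd]
    push_cast
    rw [ZMod.natCast_val, ZMod.cast_id, hb, sub_self]
  rw [Complex.exp_eq_exp_iff_exists_int]
  refine ⟨k, ?_⟩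
  have hb' : (b.val : ℂ) = (m : ℂ) + (q : ℂ) * k := by
    have : (b.val : ℤ) = m + q * k := by linarith
    exact_mod_cast congrArg (Int.cast : ℤ → ℂ) this
  have hq0 : (q : ℂ) ≠ 0 := Nat.cast_ne_zero.mpr (NeZero.ne q)
  rw [hb']
  field_simp

lemma conj_rootNumberOdd (q : ℕ) [NeZero q] [Fact q.Prime] (χ : DirichletCharacter ℂ q) :
    (starRingEnd ℂ) (rootNumberOdd χ)
      = (∑ a : ZMod q, χ a⁻¹ * Complex.exp (-(2 * Real.pi * Complex.I * (a.val : ℂ) / q))) /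
          (-(Complex.I * Real.sqrt q)) := by
  unfold rootNumberOdd
  rw [map_div₀, map_sum]
  congr 1
  · refine Finset.sum_congr rfl fun a _ => ?_
    rw [map_mul, ← Complex.exp_conj]
    congr 1
    · rw [show (starRingEnd ℂ) (χ a) = star (χ a) from rfl, MulChar.star_apply',
        MulChar.inv_apply']
    · simp only [map_div₀, map_mul, Complex.conj_I, Complex.conj_ofReal, map_natCast, map_ofNat]
      ring
  · simp only [map_mul, Complex.conj_I, Complex.conj_ofReal, map_natCast]
    ring


/-- for prime `q` and any integer `n`,
`sin(2πn/q) = (√q/(q-1))·∑_{χ odd} ε̄_χ χ(n)`. -/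
theorem sin_eq_char_expansion (q : ℕ) [NeZero q] (hq : q.Prime) (n : ℤ) :
    (Real.sin (2 * Real.pi * (n : ℝ) / q) : ℂ) =
      (Real.sqrt q : ℂ) / ((q : ℂ) - 1) *
        ∑ χ ∈ Finset.univ.filter (fun χ : DirichletCharacter ℂ q => χ.Odd),
          (starRingEnd ℂ) (rootNumberOdd χ) * χ (n : ZMod q) := by
  have : Fact q.Prime := ⟨hq⟩
  have hq0R : (q : ℝ) ≠ 0 := Nat.cast_ne_zero.mpr (NeZero.ne q)
  have hq0 : (q : ℂ) ≠ 0 := Nat.cast_ne_zero.mpr (NeZero.ne q)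
  by_cases hn : (n : ZMod q) = 0
  · -- both sides are zero
    obtain ⟨k, hk⟩ : (q : ℤ) ∣ n := by rwa [← ZMod.intCast_zmod_eq_zero_iff_dvd]
    have hL : Real.sin (2 * Real.pi * (n : ℝ) / q) = 0 := by
      have : 2 * Real.pi * (n : ℝ) / q = (2 * k : ℤ) * Real.pi := by
        rw [hk]; push_cast; field_simp
      rw [this, Real.sin_int_mul_pi]
    rw [hL]
    rw [Complex.ofReal_zero]
    have : ∑ χ ∈ Finset.univ.filter (fun χ : DirichletCharacter ℂ q => χ.Odd),
        (starRingEnd ℂ) (rootNumberOdd χ) * χ (n : ZMod q) = 0 := by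
      refine Finset.sum_eq_zero fun χ _ => ?_
      rw [hn, MulChar.map_zero, mul_zero]
    rw [this, mul_zero]
  · -- main case
    have hu : IsUnit (n : ZMod q) := by
      rwa [isUnit_iff_ne_zero]
    set N : ZMod q := (n : ZMod q) with hN
    -- step 1 : 2 * filtered sum = full weighted sum
    have h2 : ∀ f : DirichletCharacter ℂ q → ℂ,
        ∑ χ : DirichletCharacter ℂ q, (1 - χ (-1)) * f χ
          = 2 * ∑ χ ∈ Finset.univ.filter (fun χ : DirichletCharacter ℂ q => χ.Odd), f χ := by
      intro f
      rw [← Finset.sum_filter_add_sum_filter_not Finset.univ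
        (fun χ : DirichletCharacter ℂ q => χ.Odd), Finset.mul_sum]
      have hodd : ∀ χ ∈ Finset.univ.filter (fun χ : DirichletCharacter ℂ q => χ.Odd),
          (1 - χ (-1)) * f χ = 2 * f χ := by
        intro χ hχ
        have h1 : χ (-1) = -1 := (Finset.mem_filter.mp hχ).2
        rw [h1]; ring
      have heven : ∀ χ ∈ Finset.univ.filter (fun χ : DirichletCharacter ℂ q => ¬ χ.Odd),
          (1 - χ (-1)) * f χ = 0 := by
        intro χ hχ
        have h1 : χ (-1) = 1 := χ.even_or_odd.resolve_right (Finset.mem_filter.mp hχ).2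
        rw [h1]; ring
      rw [Finset.sum_congr rfl hodd, Finset.sum_congr rfl heven, Finset.sum_const_zero, add_zero]
    -- inner orthogonality sum
    have hinner : ∀ a : ZMod q,
        ∑ χ : DirichletCharacter ℂ q, (1 - χ (-1)) * (χ a⁻¹ * χ N)
          = (if a = N then (q.totient : ℂ) else 0) - (if a = -N then (q.totient : ℂ) else 0) := by
      intro a
      rcases eq_or_ne a 0 with rfl | ha
      · have hN0 : N ≠ 0 := hu.ne_zero
        have hL0 : ∑ χ : DirichletCharacter ℂ q, (1 - χ (-1)) * (χ (0 : ZMod q)⁻¹ * χ N) = 0 :=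
          Finset.sum_eq_zero fun χ _ => by rw [inv_zero, MulChar.map_zero]; ring
        rw [hL0, if_neg (fun h => hN0 h.symm), if_neg (fun h => hN0 (neg_eq_zero.mp h.symm)),
          sub_zero]
      · have ha' : IsUnit a := isUnit_iff_ne_zero.mpr ha
        have step : ∀ χ : DirichletCharacter ℂ q,
            (1 - χ (-1)) * (χ a⁻¹ * χ N) = χ a⁻¹ * χ N - χ a⁻¹ * χ (-N) := by
          intro χ
          have : χ (-N) = χ (-1) * χ N := by rw [← map_mul]; ring_nf
          rw [this]; ring
        rw [Finset.sum_congr rfl fun χ _ => step χ, Finset.sum_sub_distrib,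
          DirichletCharacter.sum_char_inv_mul_char_eq ℂ ha' N,
          DirichletCharacter.sum_char_inv_mul_char_eq ℂ ha' (-N)]
    -- put things together
    set S : ℂ := ∑ χ ∈ Finset.univ.filter (fun χ : DirichletCharacter ℂ q => χ.Odd),
        (starRingEnd ℂ) (rootNumberOdd χ) * χ N with hS
    have key : 2 * S = (q.totient : ℂ) *
        (Complex.exp (-(2 * Real.pi * Complex.I * (N.val : ℂ) / q))
          - Complex.exp (-(2 * Real.pi * Complex.I * ((-N).val : ℂ) / q))) /
        (-(Complex.I * Real.sqrt q)) := by
      rw [← h2 fun χ => (starRingEnd ℂ) (rootNumberOdd χ) * χ N]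
      have expand : ∀ χ : DirichletCharacter ℂ q,
          (1 - χ (-1)) * ((starRingEnd ℂ) (rootNumberOdd χ) * χ N)
            = (∑ a : ZMod q, ((1 - χ (-1)) * (χ a⁻¹ * χ N))
                * Complex.exp (-(2 * Real.pi * Complex.I * (a.val : ℂ) / q)))
              / (-(Complex.I * Real.sqrt q)) := by
        intro χ
        rw [conj_rootNumberOdd, div_mul_eq_mul_div, ← mul_div_assoc]
        congr 1
        rw [Finset.sum_mul, Finset.mul_sum]
        exact Finset.sum_congr rfl fun a _ => by ring
      rw [Finset.sum_congr rfl fun χ _ => expand χ, ← Finset.sum_div, Finset.sum_comm]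
      congr 1
      have : ∀ a : ZMod q,
          ∑ χ : DirichletCharacter ℂ q, ((1 - χ (-1)) * (χ a⁻¹ * χ N))
              * Complex.exp (-(2 * Real.pi * Complex.I * (a.val : ℂ) / q))
            = ((if a = N then (q.totient : ℂ) else 0) - (if a = -N then (q.totient : ℂ) else 0))
              * Complex.exp (-(2 * Real.pi * Complex.I * (a.val : ℂ) / q)) := by
        intro a
        rw [← Finset.sum_mul, hinner]
      rw [Finset.sum_congr rfl fun a _ => this a]
      simp only [sub_mul, ite_mul, zero_mul, Finset.sum_sub_distrib, Finset.sum_ite_eq',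
        Finset.mem_univ, if_true]
      ring
    -- identify the exponentials
    have hE1 : Complex.exp (-(2 * Real.pi * Complex.I * (N.val : ℂ) / q))
        = Complex.exp (-(2 * Real.pi * Complex.I * (n : ℂ) / q)) := by
      rw [Complex.exp_neg, Complex.exp_neg, exp_val_eq q n N rfl]
    have hE2 : Complex.exp (-(2 * Real.pi * Complex.I * ((-N).val : ℂ) / q))
        = Complex.exp (2 * Real.pi * Complex.I * (n : ℂ) / q) := by
      rw [Complex.exp_neg, exp_val_eq q (-n) (-N) (by push_cast; rfl), ← Complex.exp_neg]
      congr 1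
      push_cast
      ring
    set y : ℝ := 2 * Real.pi * (n : ℝ) / q with hy
    have hyC : (y : ℂ) = 2 * Real.pi * (n : ℂ) / q := by
      rw [hy]; push_cast; ring
    have hsin : Complex.exp (-(2 * Real.pi * Complex.I * (n : ℂ) / q))
        - Complex.exp (2 * Real.pi * Complex.I * (n : ℂ) / q)
        = -2 * Complex.I * Complex.sin (y : ℂ) := by
      rw [Complex.sin, hyC]
      rw [show -(2 * Real.pi * Complex.I * (n : ℂ) / q) = -(2 * Real.pi * (n : ℂ) / q) * Complex.I
        by ring, show 2 * Real.pi * Complex.I * (n : ℂ) / q = 2 * Real.pi * (n : ℂ) / q * Complex.I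
        by ring]
      have hI : Complex.I * Complex.I = -1 := Complex.I_mul_I
      field_simp
      ring_nf
      rw [Complex.I_sq]
      ring
    -- final computation
    have hs0 : (Real.sqrt q : ℂ) ≠ 0 := by
      simp only [ne_eq, Complex.ofReal_eq_zero]
      exact Real.sqrt_ne_zero'.mpr (by positivity)
    have hq1 : (q : ℂ) - 1 ≠ 0 := by
      rw [sub_ne_zero]
      exact_mod_cast hq.ne_one
    have htot : (q.totient : ℂ) = (q : ℂ) - 1 := by
      rw [Nat.totient_prime hq, Nat.cast_sub hq.one_le, Nat.cast_one]
    have hSval : S = ((q : ℂ) - 1) * Complex.sin (y : ℂ) / (Real.sqrt q : ℂ) := by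
      have hI : Complex.I ≠ 0 := Complex.I_ne_zero
      have hkey2 := key
      rw [hE1, hE2, hsin, htot] at hkey2
      have hcalc : ((q : ℂ) - 1) * (-2 * Complex.I * Complex.sin (y : ℂ)) /
          (-(Complex.I * (Real.sqrt q : ℂ)))
          = 2 * (((q : ℂ) - 1) * Complex.sin (y : ℂ) / (Real.sqrt q : ℂ)) := by
        field_simp
      rw [hcalc] at hkey2
      exact mul_left_cancel₀ two_ne_zero hkey2
    rw [Complex.ofReal_sin, hSval]
    field_simp
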